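/- For every edge-labelled complementary region (i, w): X_∞(∂^R(i,w)) − X_∞(∂^L(i,w)) = Gap_Φ(i,w), where ∂^L(i,w) := (i, w ++ [false] ++ true^∞) and ∂^R(i,w) := (i, w ++ [true] ++ false^∞). Moreover, for every i : Fin N with i + 1 ≤ N − 1, the root region between initial edges i and i+1 satisfies X_∞((i+1, false^∞)) − X_∞((i, true^∞)) = ( Φ_∞((i, true^∞)) + Φ_∞((i+1, false^∞)) ) / 2. -/

import Mathlib

noncomputable section
open Filter Topology Classical

/-- Lexicographic strict order on positive edges (compared within a sphere `S(n)`). -/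
def EdgeLt {N : ℕ} (e f : Fin N × List Bool) : Prop :=
  e.1 < f.1 ∨ (e.1 = f.1 ∧ List.Lex (· < ·) e.2 f.2)

/-- The word `[s 0, …, s (m-1)]` of length `m`. -/
def word (s : ℕ → Bool) (m : ℕ) : List Bool := List.ofFn (fun k : Fin m => s k.val)

/-- The constant Boolean sequence `c^∞`. -/
def constSeq (c : Bool) : ℕ → Bool := fun _ => c

/-- The Boolean sequence `w ++ [b] ++ c^∞`. -/
def extendSeq (w : List Bool) (b c : Bool) : ℕ → Bool := fun n =>
  if h : n < w.length then w.get ⟨n, h⟩ else if n = w.length then b else c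

/-- `Y (i, v)` for an edge of `S (m+1)`: `Y_n(e) = Φ(e)/2 + ∑_{f ∈ S(n), f < e} Φ(f)`. -/
def Y {N : ℕ} (Φ : Fin N → List Bool → ℝ) (m : ℕ) (i : Fin N) (v : Fin m → Bool) : ℝ :=
  Φ i (List.ofFn v) / 2 +
    ∑ x : Fin N × (Fin m → Bool),
      if EdgeLt (x.1, List.ofFn x.2) (i, List.ofFn v) then Φ x.1 (List.ofFn x.2) else 0

/-- `X_n(p) = Y_n(p^n)`; here `m = n - 1` is the word length of the `n`-th edge. -/
def X {N : ℕ} (Φ : Fin N → List Bool → ℝ) (m : ℕ) (p : Fin N × (ℕ → Bool)) : ℝ :=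
  Y Φ m p.1 (fun k => p.2 k.val)

/-- `X_∞(p) = lim_n X_n(p)` (the limit exists for every path). -/
def Xinf {N : ℕ} (Φ : Fin N → List Bool → ℝ) (p : Fin N × (ℕ → Bool)) : ℝ :=
  limUnder atTop (fun m => X Φ m p)

/-- `Φ_∞(p) = lim_n Φ(p^n)`. -/
def PhiInf {N : ℕ} (Φ : Fin N → List Bool → ℝ) (p : Fin N × (ℕ → Bool)) : ℝ :=
  limUnder atTop (fun m => Φ p.1 (word p.2 m))

lemma lex_irrefl : ∀ l : List Bool, ¬ List.Lex (· < ·) l l := by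
  intro l
  induction l with
  | nil => intro h; cases h
  | cons a t ih =>
    intro h
    cases h with
    | cons h => exact ih h
    | rel h => exact lt_irrefl _ h

lemma lex_append_iff : ∀ (u v : List Bool), u.length = v.length → ∀ b c : Bool,
    (List.Lex (· < ·) (u ++ [b]) (v ++ [c]) ↔ List.Lex (· < ·) u v ∨ (u = v ∧ b < c)) := by
  intro u
  induction u with
  | nil =>
    intro v h b c
    cases v with
    | nil =>
      simp only [List.nil_append]
      constructor
      · intro h
        cases h with
        | rel h => exact Or.inr ⟨by trivial, h⟩
        | cons h => cases h
      · rintro (h | ⟨-, h⟩)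
        · cases h
        · exact List.Lex.rel h
    | cons _ _ => simp at h
  | cons a u ih =>
    intro v h b c
    cases v with
    | nil => simp at h
    | cons a' v =>
      simp only [List.length_cons, Nat.add_right_cancel_iff] at h
      simp only [List.cons_append]
      constructor
      · intro hl
        cases hl with
        | rel hr => exact Or.inl (List.Lex.rel hr)
        | cons hl =>
          rcases (ih _ h b c).1 hl with h1 | ⟨h1, h2⟩
          · exact Or.inl (List.Lex.cons h1)
          · exact Or.inr ⟨by rw [h1], h2⟩
      · rintro (h1 | ⟨h1, h2⟩)
        · cases h1 with
          | rel hr => exact List.Lex.rel hr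
          | cons h1 => exact List.Lex.cons ((ih _ h b c).2 (Or.inl h1))
        · injection h1 with h1a h1t
          subst h1a; subst h1t
          exact List.Lex.cons ((ih _ rfl b c).2 (Or.inr ⟨rfl, h2⟩))

lemma edgeLt_append_iff {N : ℕ} (x1 i : Fin N) (u v : List Bool) (h : u.length = v.length)
    (b c : Bool) :
    EdgeLt (x1, u ++ [b]) (i, v ++ [c]) ↔
      (EdgeLt (x1, u) (i, v) ∨ (x1 = i ∧ u = v ∧ b < c)) := by
  unfold EdgeLt
  simp only
  rw [lex_append_iff u v h b c]
  tauto

noncomputable def Ssum {N : ℕ} (Φ : Fin N → List Bool → ℝ) (m : ℕ) (i : Fin N)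
    (v : Fin m → Bool) : ℝ :=
  ∑ x : Fin N × (Fin m → Bool),
    if EdgeLt (x.1, List.ofFn x.2) (i, List.ofFn v) then Φ x.1 (List.ofFn x.2) else 0

lemma ofFn_snoc' {m : ℕ} (u : Fin m → Bool) (b : Bool) :
    List.ofFn (Fin.snoc u b) = List.ofFn u ++ [b] := by
  rw [List.ofFn_succ']
  simp [Fin.snoc_castSucc, List.concat_eq_append]

def snocEquiv' (m : ℕ) : ((Fin m → Bool) × Bool) ≃ (Fin (m+1) → Bool) where
  toFun x := Fin.snoc x.1 x.2
  invFun g := (fun k => g k.castSucc, g (Fin.last m))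
  left_inv x := by
    refine Prod.ext ?_ ?_
    · funext k; simp
    · simp
  right_inv g := by
    funext k
    refine Fin.lastCases ?_ ?_ k
    · simp
    · intro j; simp

lemma Ssum_snoc {N : ℕ} (Φ : Fin N → List Bool → ℝ)
    (hharm : ∀ (i : Fin N) (w : List Bool), Φ i w = Φ i (w ++ [false]) + Φ i (w ++ [true]))
    (m : ℕ) (i : Fin N) (v : Fin m → Bool) (c : Bool) :
    Ssum Φ (m+1) i (Fin.snoc v c) =
      Ssum Φ m i v + (if c then Φ i (List.ofFn v ++ [false]) else 0) := by
  have key := Equiv.sum_comp ((Equiv.refl (Fin N)).prodCongr (snocEquiv' m))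
    (fun x : Fin N × (Fin (m+1) → Bool) =>
      if EdgeLt (x.1, List.ofFn x.2) (i, List.ofFn (Fin.snoc v c)) then Φ x.1 (List.ofFn x.2)
      else 0)
  rw [Ssum, ← key]
  simp only [Equiv.prodCongr_apply, Equiv.coe_refl, Prod.map, id_eq, snocEquiv',
    Equiv.coe_fn_mk, ofFn_snoc']
  rw [Fintype.sum_prod_type]
  have step1 : ∀ a : Fin N,
      (∑ y : (Fin m → Bool) × Bool,
        if EdgeLt (a, List.ofFn y.1 ++ [y.2]) (i, List.ofFn v ++ [c]) then
          Φ a (List.ofFn y.1 ++ [y.2]) else 0)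
      = ∑ u : Fin m → Bool,
          ((if EdgeLt (a, List.ofFn u) (i, List.ofFn v) then Φ a (List.ofFn u) else 0) +
           (if c = true ∧ a = i ∧ u = v then Φ i (List.ofFn v ++ [false]) else 0)) := by
    intro a
    rw [Fintype.sum_prod_type]
    refine Finset.sum_congr rfl fun u _ => ?_
    rw [Fintype.sum_bool]
    rw [edgeLt_append_iff a i _ _ (by simp) true c, edgeLt_append_iff a i _ _ (by simp) false c]
    by_cases hQ : EdgeLt (a, List.ofFn u) (i, List.ofFn v)
    · have hR : ¬ (a = i ∧ List.ofFn u = List.ofFn v) := by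
        rintro ⟨rfl, h2⟩
        rcases hQ with h | ⟨-, h⟩
        · exact lt_irrefl _ h
        · rw [h2] at h; exact lex_irrefl _ h
      have hR' : ¬ (c = true ∧ a = i ∧ u = v) := by
        rintro ⟨-, rfl, rfl⟩
        exact hR ⟨rfl, rfl⟩
      rw [if_pos (Or.inl hQ), if_pos (Or.inl hQ), if_pos hQ, if_neg hR']
      linarith [hharm a (List.ofFn u)]
    · by_cases hR : a = i ∧ u = v
      · obtain ⟨rfl, rfl⟩ := hR
        cases c
        · simp [hQ, Bool.lt_iff]
        · simp [hQ, Bool.lt_iff]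
      · have hR2 : ¬ (a = i ∧ List.ofFn u = List.ofFn v) := by
          rintro ⟨rfl, h2⟩
          exact hR ⟨rfl, List.ofFn_injective h2⟩
        cases c <;> simp [hQ, hR, hR2, Bool.lt_iff]
  rw [Finset.sum_congr rfl fun a _ => step1 a]
  simp only [Finset.sum_add_distrib]
  congr 1
  · rw [Ssum, Fintype.sum_prod_type]
  · cases c
    · simp
    · simp only [true_and, if_true]
      have inner : ∀ a : Fin N,
          (∑ u : Fin m → Bool, if a = i ∧ u = v then Φ i (List.ofFn v ++ [false]) else 0)
          = if a = i then Φ i (List.ofFn v ++ [false]) else 0 := by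
        intro a
        by_cases h : a = i
        · subst h; simp
        · simp [h]
      rw [Finset.sum_congr rfl fun a _ => inner a]
      simp

lemma Y_eq {N : ℕ} (Φ : Fin N → List Bool → ℝ) (m : ℕ) (i : Fin N) (v : Fin m → Bool) :
    Y Φ m i v = Φ i (List.ofFn v) / 2 + Ssum Φ m i v := rfl

lemma word_succ (s : ℕ → Bool) (m : ℕ) : word s (m+1) = word s m ++ [s m] := by
  rw [word, List.ofFn_succ']
  simp [List.concat_eq_append, word]

lemma word_eq (s : ℕ → Bool) (m : ℕ) : List.ofFn (fun k : Fin m => s k.val) = word s m := rfl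

lemma pathFun_succ (s : ℕ → Bool) (m : ℕ) :
    (fun k : Fin (m+1) => s k.val) = Fin.snoc (fun k : Fin m => s k.val) (s m) := by
  funext k
  refine Fin.lastCases ?_ ?_ k
  · simp
  · intro j; simp

lemma X_succ {N : ℕ} (Φ : Fin N → List Bool → ℝ)
    (hharm : ∀ (i : Fin N) (w : List Bool), Φ i w = Φ i (w ++ [false]) + Φ i (w ++ [true]))
    (p : Fin N × (ℕ → Bool)) (m : ℕ) :
    X Φ (m+1) p = X Φ m p +
      (if p.2 m then (Φ p.1 (word p.2 m) - Φ p.1 (word p.2 (m+1))) / 2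
       else -((Φ p.1 (word p.2 m) - Φ p.1 (word p.2 (m+1))) / 2)) := by
  obtain ⟨i, s⟩ := p
  show Y Φ (m+1) i _ = Y Φ m i _ + _
  rw [pathFun_succ, Y_eq, Y_eq, Ssum_snoc Φ hharm, ofFn_snoc', word_eq, word_succ]
  have hh := hharm i (word s m)
  cases hsm : s m <;> simp only [hsm] <;>
    simp only [if_true, if_false, Bool.false_eq_true, add_zero] <;> linarith

lemma phi_tendsto {N : ℕ} (Φ : Fin N → List Bool → ℝ)
    (hpos : ∀ (i : Fin N) (w : List Bool), 0 < Φ i w)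
    (hharm : ∀ (i : Fin N) (w : List Bool), Φ i w = Φ i (w ++ [false]) + Φ i (w ++ [true]))
    (p : Fin N × (ℕ → Bool)) :
    Tendsto (fun m => Φ p.1 (word p.2 m)) atTop (𝓝 (PhiInf Φ p)) := by
  have hanti : Antitone (fun m => Φ p.1 (word p.2 m)) := by
    refine antitone_nat_of_succ_le fun m => ?_
    rw [word_succ]
    have hh := hharm p.1 (word p.2 m)
    have h0 := hpos p.1 (word p.2 m ++ [false])
    have h1 := hpos p.1 (word p.2 m ++ [true])
    cases p.2 m <;> linarith
  have hb : BddBelow (Set.range fun m => Φ p.1 (word p.2 m)) := by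
    refine ⟨0, ?_⟩
    rintro x ⟨m, rfl⟩
    exact (hpos _ _).le
  have h := tendsto_atTop_ciInf hanti hb
  rw [PhiInf, h.limUnder_eq]
  exact h

lemma X_shift_true {N : ℕ} (Φ : Fin N → List Bool → ℝ)
    (hharm : ∀ (i : Fin N) (w : List Bool), Φ i w = Φ i (w ++ [false]) + Φ i (w ++ [true]))
    (p : Fin N × (ℕ → Bool)) (m0 : ℕ) (hs : ∀ m, m0 ≤ m → p.2 m = true) :
    ∀ m, m0 ≤ m → X Φ m p + Φ p.1 (word p.2 m) / 2
      = X Φ m0 p + Φ p.1 (word p.2 m0) / 2 := by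
  intro m hm
  induction m, hm using Nat.le_induction with
  | base => rfl
  | succ n hn ih =>
    rw [X_succ Φ hharm p n, hs n hn, if_pos rfl]
    linarith

lemma X_shift_false {N : ℕ} (Φ : Fin N → List Bool → ℝ)
    (hharm : ∀ (i : Fin N) (w : List Bool), Φ i w = Φ i (w ++ [false]) + Φ i (w ++ [true]))
    (p : Fin N × (ℕ → Bool)) (m0 : ℕ) (hs : ∀ m, m0 ≤ m → p.2 m = false) :
    ∀ m, m0 ≤ m → X Φ m p - Φ p.1 (word p.2 m) / 2
      = X Φ m0 p - Φ p.1 (word p.2 m0) / 2 := by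
  intro m hm
  induction m, hm using Nat.le_induction with
  | base => rfl
  | succ n hn ih =>
    rw [X_succ Φ hharm p n, hs n hn]
    simp only [Bool.false_eq_true, if_false]
    linarith

lemma Xinf_true {N : ℕ} (Φ : Fin N → List Bool → ℝ)
    (hpos : ∀ (i : Fin N) (w : List Bool), 0 < Φ i w)
    (hharm : ∀ (i : Fin N) (w : List Bool), Φ i w = Φ i (w ++ [false]) + Φ i (w ++ [true]))
    (p : Fin N × (ℕ → Bool)) (m0 : ℕ) (hs : ∀ m, m0 ≤ m → p.2 m = true) :
    Xinf Φ p = X Φ m0 p + Φ p.1 (word p.2 m0) / 2 - PhiInf Φ p / 2 := by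
  have hphi := phi_tendsto Φ hpos hharm p
  have h2 : Tendsto (fun m => X Φ m0 p + Φ p.1 (word p.2 m0) / 2 - Φ p.1 (word p.2 m) / 2)
      atTop (𝓝 (X Φ m0 p + Φ p.1 (word p.2 m0) / 2 - PhiInf Φ p / 2)) :=
    tendsto_const_nhds.sub (hphi.div_const 2)
  have heq : (fun m => X Φ m p) =ᶠ[atTop]
      (fun m => X Φ m0 p + Φ p.1 (word p.2 m0) / 2 - Φ p.1 (word p.2 m) / 2) := by
    filter_upwards [eventually_ge_atTop m0] with m hm
    have := X_shift_true Φ hharm p m0 hs m hm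
    linarith
  exact (h2.congr' heq.symm).limUnder_eq

lemma Xinf_false {N : ℕ} (Φ : Fin N → List Bool → ℝ)
    (hpos : ∀ (i : Fin N) (w : List Bool), 0 < Φ i w)
    (hharm : ∀ (i : Fin N) (w : List Bool), Φ i w = Φ i (w ++ [false]) + Φ i (w ++ [true]))
    (p : Fin N × (ℕ → Bool)) (m0 : ℕ) (hs : ∀ m, m0 ≤ m → p.2 m = false) :
    Xinf Φ p = X Φ m0 p - Φ p.1 (word p.2 m0) / 2 + PhiInf Φ p / 2 := by
  have hphi := phi_tendsto Φ hpos hharm p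
  have h2 : Tendsto (fun m => X Φ m0 p - Φ p.1 (word p.2 m0) / 2 + Φ p.1 (word p.2 m) / 2)
      atTop (𝓝 (X Φ m0 p - Φ p.1 (word p.2 m0) / 2 + PhiInf Φ p / 2)) :=
    tendsto_const_nhds.add (hphi.div_const 2)
  have heq : (fun m => X Φ m p) =ᶠ[atTop]
      (fun m => X Φ m0 p - Φ p.1 (word p.2 m0) / 2 + Φ p.1 (word p.2 m) / 2) := by
    filter_upwards [eventually_ge_atTop m0] with m hm
    have := X_shift_false Φ hharm p m0 hs m hm
    linarith
  exact (h2.congr' heq.symm).limUnder_eq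

lemma extendSeq_ge (w : List Bool) (b c : Bool) (m : ℕ) (hm : w.length + 1 ≤ m) :
    extendSeq w b c m = c := by
  rw [extendSeq, dif_neg (by omega), if_neg (by omega)]

lemma extendSeq_len (w : List Bool) (b c : Bool) : extendSeq w b c w.length = b := by
  rw [extendSeq, dif_neg (by omega), if_pos rfl]

lemma word_extendSeq (w : List Bool) (b c : Bool) : word (extendSeq w b c) w.length = w := by
  have h : (fun k : Fin w.length => extendSeq w b c k.val) = fun k => w.get k := by
    funext k
    rw [extendSeq, dif_pos k.isLt]
  rw [word, h, List.ofFn_get]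

lemma word_extendSeq_succ (w : List Bool) (b c : Bool) :
    word (extendSeq w b c) (w.length + 1) = w ++ [b] := by
  rw [word_succ, word_extendSeq, extendSeq_len]

lemma word_zero (s : ℕ → Bool) : word s 0 = [] := by
  simp [word]

lemma X_zero {N : ℕ} (Φ : Fin N → List Bool → ℝ) (p : Fin N × (ℕ → Bool)) :
    X Φ 0 p = Φ p.1 [] / 2 + ∑ a : Fin N, (if a < p.1 then Φ a [] else 0) := by
  rw [X, Y]
  have hnil : ∀ v : Fin 0 → Bool, List.ofFn v = [] := by intro v; simp
  congr 1
  rw [Fintype.sum_prod_type]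
  refine Finset.sum_congr rfl fun a _ => ?_
  rw [Fintype.sum_unique, hnil]
  simp only [hnil]
  have : EdgeLt ((a : Fin N), ([] : List Bool)) (p.1, []) ↔ a < p.1 := by
    rw [EdgeLt]
    simp only
    constructor
    · rintro (h | ⟨-, h⟩)
      · exact h
      · exact absurd h (lex_irrefl [])
    · exact Or.inl
  by_cases h : a < p.1
  · rw [if_pos (this.2 h), if_pos h]
  · rw [if_neg (fun hh => h (this.1 hh)), if_neg h]

/-- **`X_∞`-width of complementary regions.** For every edge-labelled complementary
region `(i, w)` with boundary paths `∂^L(i,w) = (i, w ++ [false] ++ true^∞)` and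
`∂^R(i,w) = (i, w ++ [true] ++ false^∞)`,
`X_∞(∂^R) − X_∞(∂^L) = Gap_Φ(i,w) = (Φ_∞(∂^L) + Φ_∞(∂^R))/2`; and for every root
region between initial edges `i` and `i+1` (with `i + 1 ≤ N − 1`),
`X_∞((i+1, false^∞)) − X_∞((i, true^∞)) = (Φ_∞((i, true^∞)) + Φ_∞((i+1, false^∞)))/2`. -/
theorem Xinfty_width_of_regions (N : ℕ) (hN : 1 ≤ N) (Φ : Fin N → List Bool → ℝ)
    (hpos : ∀ (i : Fin N) (w : List Bool), 0 < Φ i w)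
    (hharm : ∀ (i : Fin N) (w : List Bool), Φ i w = Φ i (w ++ [false]) + Φ i (w ++ [true])) :
    (∀ (i : Fin N) (w : List Bool),
      Xinf Φ (i, extendSeq w true false) - Xinf Φ (i, extendSeq w false true) =
        (PhiInf Φ (i, extendSeq w false true) + PhiInf Φ (i, extendSeq w true false)) / 2) ∧
    (∀ i j : Fin N, (j : ℕ) = (i : ℕ) + 1 →
      Xinf Φ (j, constSeq false) - Xinf Φ (i, constSeq true) =
        (PhiInf Φ (i, constSeq true) + PhiInf Φ (j, constSeq false)) / 2) := by
  constructor
  · intro i w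
    set pL : Fin N × (ℕ → Bool) := (i, extendSeq w false true) with hpL
    set pR : Fin N × (ℕ → Bool) := (i, extendSeq w true false) with hpR
    have hsL : ∀ m, w.length + 1 ≤ m → pL.2 m = true := fun m hm => extendSeq_ge w false true m hm
    have hsR : ∀ m, w.length + 1 ≤ m → pR.2 m = false := fun m hm => extendSeq_ge w true false m hm
    have hL := Xinf_true Φ hpos hharm pL (w.length + 1) hsL
    have hR := Xinf_false Φ hpos hharm pR (w.length + 1) hsR
    have hwL : word pL.2 (w.length + 1) = w ++ [false] := word_extendSeq_succ w false true
    have hwR : word pR.2 (w.length + 1) = w ++ [true] := word_extendSeq_succ w true false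
    have hwL0 : word pL.2 w.length = w := word_extendSeq w false true
    have hwR0 : word pR.2 w.length = w := word_extendSeq w true false
    -- X at level w.length agree
    have hXw : X Φ w.length pL = X Φ w.length pR := by
      rw [X, X]
      congr 1
      funext k
      show extendSeq w false true k.val = extendSeq w true false k.val
      rw [extendSeq, extendSeq, dif_pos k.isLt, dif_pos k.isLt]
    have hL1 := X_succ Φ hharm pL w.length
    have hR1 := X_succ Φ hharm pR w.length
    rw [show pL.2 w.length = false from extendSeq_len w false true, if_neg (by simp)] at hL1
    rw [show pR.2 w.length = true from extendSeq_len w true false, if_pos rfl] at hR1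
    rw [hwL, hwL0] at hL1
    rw [hwR, hwR0] at hR1
    rw [hL, hR, hwL, hwR, hL1, hR1, hXw]
    have := hharm i w
    simp only [hpL, hpR] at *
    linarith
  · intro i j hj
    set pL : Fin N × (ℕ → Bool) := (i, constSeq true) with hpL
    set pR : Fin N × (ℕ → Bool) := (j, constSeq false) with hpR
    have hL := Xinf_true Φ hpos hharm pL 0 (fun m _ => rfl)
    have hR := Xinf_false Φ hpos hharm pR 0 (fun m _ => rfl)
    rw [hL, hR, word_zero, word_zero, X_zero, X_zero]
    have hsum : ∑ a : Fin N, (if a < pR.1 then Φ a [] else 0)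
        = (∑ a : Fin N, if a < pL.1 then Φ a [] else 0) + Φ i [] := by
      have key : ∀ a : Fin N, (if a < pR.1 then Φ a [] else 0)
          = (if a < pL.1 then Φ a [] else 0) + (if a = i then Φ a [] else 0) := by
        intro a
        have hai : a < pR.1 ↔ (a : ℕ) < (j : ℕ) := Fin.lt_def
        have hai2 : a < pL.1 ↔ (a : ℕ) < (i : ℕ) := Fin.lt_def
        have hae : a = i ↔ (a : ℕ) = (i : ℕ) := Fin.ext_iff
        by_cases h1 : (a : ℕ) < (i : ℕ)
        · rw [if_pos (hai.2 (by omega)), if_pos (hai2.2 h1), if_neg (by rw [hae]; omega)]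
          ring
        · by_cases h2 : (a : ℕ) = (i : ℕ)
          · rw [if_pos (hai.2 (by omega)), if_neg (by rw [hai2]; omega), if_pos (hae.2 h2)]
            rw [hae.2 h2]
            ring
          · rw [if_neg (by rw [hai]; omega), if_neg (by rw [hai2]; omega), if_neg (by rw [hae]; omega)]
            ring
      rw [Finset.sum_congr rfl fun a _ => key a, Finset.sum_add_distrib]
      congr 1
      simp
    rw [hsum]
    simp only [hpL, hpR]
    ring
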